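/- arXiv:1701.00878 — 2 statements merged into one kernel-verified Lean document; each statement's English description precedes it below -/
import Mathlib

section
/- Let L be the Laplacian matrix of a connected undirected simple graph on N vertices, and let H_1, ..., H_N be real matrices each with M columns such that the sum of H_n^T H_n over n is invertible. Then for any positive reals α, β, the matrix J = β(L ⊗ I_M) + α Σ_n E_n^T H_n^T H_n E_n (equivalently β(L ⊗ I_M) + α D_H^T D_H where D_H = blkdiag(H_1,...,H_N)) is positive definite. -/
open scoped Kronecker
open Matrix Filter

/-- The set of eigenvalues of a matrix. -/
def eigSet {ι : Type*} [Fintype ι] (A : Matrix ι ι ℝ) : Set ℝ :=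
  {t : ℝ | ∃ v : ι → ℝ, v ≠ 0 ∧ A.mulVec v = t • v}

/-- Largest eigenvalue of a (symmetric) real matrix. -/
noncomputable def lmax {ι : Type*} [Fintype ι] (A : Matrix ι ι ℝ) : ℝ := sSup (eigSet A)

/-- Smallest eigenvalue of a (symmetric) real matrix. -/
noncomputable def lmin {ι : Type*} [Fintype ι] (A : Matrix ι ι ℝ) : ℝ := sInf (eigSet A)

/-- Second-smallest Laplacian eigenvalue (algebraic connectivity):
smallest eigenvalue on the subspace orthogonal to the all-ones vector. -/
noncomputable def lambda2 {N : ℕ} (L : Matrix (Fin N) (Fin N) ℝ) : ℝ :=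
  sInf {t : ℝ | ∃ v : Fin N → ℝ, v ≠ 0 ∧ (∑ i, v i) = 0 ∧ L.mulVec v = t • v}

/-- Block diagonal matrix with square blocks `A i`, i.e. `Σ_i E_iᵀ (A i) E_i`. -/
def blkOf {ι : Type*} [DecidableEq ι] {M : ℕ} (A : ι → Matrix (Fin M) (Fin M) ℝ) :
    Matrix (ι × Fin M) (ι × Fin M) ℝ :=
  Matrix.of fun p q => if p.1 = q.1 then A p.1 p.2 q.2 else 0

/-- Euclidean norm of a finitely supported real vector. -/
noncomputable def enorm {ι : Type*} [Fintype ι] (v : ι → ℝ) : ℝ :=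
  Real.sqrt (∑ i, v i ^ 2)

theorem stmt0 {N M : ℕ} (G : SimpleGraph (Fin N)) [DecidableRel G.Adj]
    (hG : G.Connected)
    (P : Fin N → ℕ) (H : ∀ n, Matrix (Fin (P n)) (Fin M) ℝ)
    (hObs : IsUnit (∑ n, (H n)ᵀ * H n))
    (α β : ℝ) (hα : 0 < α) (hβ : 0 < β) :
    (β • (G.lapMatrix ℝ ⊗ₖ (1 : Matrix (Fin M) (Fin M) ℝ)) +
      α • blkOf (fun n => (H n)ᵀ * H n)).PosDef := by
  set L := G.lapMatrix ℝ with hL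
  rw [posDef_iff_dotProduct_mulVec]
  constructor
  · -- Hermitian
    rw [IsHermitian, conjTranspose_eq_transpose_of_trivial, transpose_add,
      transpose_smul, transpose_smul]
    congr 1
    · congr 1
      show (L ⊗ₖ (1 : Matrix (Fin M) (Fin M) ℝ))ᵀ = _
      rw [show (L ⊗ₖ (1 : Matrix (Fin M) (Fin M) ℝ))ᵀ = Lᵀ ⊗ₖ (1 : Matrix (Fin M) (Fin M) ℝ)ᵀ from
        (kroneckerMap_transpose _ _ _).symm, show Lᵀ = L from G.isSymm_lapMatrix (R := ℝ), transpose_one]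
    · congr 1
      ext ⟨n, m⟩ ⟨n', m'⟩
      simp only [transpose_apply, blkOf, of_apply]
      by_cases h : n = n'
      · subst h
        simp only [if_pos rfl]
        have : ((H n)ᵀ * H n)ᵀ = (H n)ᵀ * H n := by
          rw [transpose_mul, transpose_transpose]
        exact congrFun (congrFun this m) m'
      · simp [h, Ne.symm h]
  · intro x hx
    rw [star_trivial]
    have hq1 : x ⬝ᵥ ((L ⊗ₖ (1 : Matrix (Fin M) (Fin M) ℝ)) *ᵥ x)
        = ∑ m : Fin M, (fun n => x (n, m)) ⬝ᵥ (L *ᵥ fun n => x (n, m)) := by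
      simp only [dotProduct, mulVec, kroneckerMap_apply, Fintype.sum_prod_type, one_apply,
        mul_ite, mul_one, mul_zero]
      rw [Finset.sum_comm]
      exact Finset.sum_congr rfl fun m _ => Finset.sum_congr rfl fun n _ => by
        simp [Finset.sum_ite_eq, Finset.mul_sum]
    have hq2 : x ⬝ᵥ (blkOf (fun n => (H n)ᵀ * H n) *ᵥ x)
        = ∑ n : Fin N, ((H n) *ᵥ fun m => x (n, m)) ⬝ᵥ ((H n) *ᵥ fun m => x (n, m)) := by
      have : ∀ n : Fin N, ((H n) *ᵥ fun m => x (n, m)) ⬝ᵥ ((H n) *ᵥ fun m => x (n, m))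
          = (fun m => x (n, m)) ⬝ᵥ (((H n)ᵀ * (H n)) *ᵥ fun m => x (n, m)) := by
        intro n
        conv_rhs => rw [← mulVec_mulVec, dotProduct_mulVec, vecMul_transpose]
      simp only [this]
      simp only [dotProduct, mulVec, blkOf, Fintype.sum_prod_type, of_apply, ite_mul, zero_mul,
        mul_ite, mul_zero]
      exact Finset.sum_congr rfl fun n _ => Finset.sum_congr rfl fun m _ => by
        simp [dotProduct, Finset.sum_ite_eq, Finset.mul_sum]
    rw [add_mulVec, dotProduct_add, smul_mulVec, smul_mulVec,
      dotProduct_smul, dotProduct_smul, smul_eq_mul, smul_eq_mul, hq1, hq2]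
    have h1nn : ∀ m : Fin M, 0 ≤ (fun n => x (n, m)) ⬝ᵥ (L *ᵥ fun n => x (n, m)) := by
      intro m
      have := (posSemidef_iff_dotProduct_mulVec.mp (G.posSemidef_lapMatrix ℝ)).2 (fun n => x (n, m))
      rwa [star_trivial] at this
    have h2nn : ∀ n : Fin N, 0 ≤ ((H n) *ᵥ fun m => x (n, m)) ⬝ᵥ ((H n) *ᵥ fun m => x (n, m)) :=
      fun n => by simpa using dotProduct_self_star_nonneg ((H n) *ᵥ fun m => x (n, m))
    have hS1 : 0 ≤ ∑ m : Fin M, (fun n => x (n, m)) ⬝ᵥ (L *ᵥ fun n => x (n, m)) :=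
      Finset.sum_nonneg fun m _ => h1nn m
    have hS2 : 0 ≤ ∑ n : Fin N, ((H n) *ᵥ fun m => x (n, m)) ⬝ᵥ ((H n) *ᵥ fun m => x (n, m)) :=
      Finset.sum_nonneg fun n _ => h2nn n
    rcases lt_or_eq_of_le hS1 with h1 | h1
    · have := mul_pos hβ h1
      nlinarith [mul_nonneg hα.le hS2]
    rcases lt_or_eq_of_le hS2 with h2 | h2
    · have := mul_pos hα h2
      nlinarith [mul_nonneg hβ.le hS1]
    exfalso
    -- both sums zero: derive x = 0
    have hterm1 : ∀ m : Fin M, (fun n => x (n, m)) ⬝ᵥ (L *ᵥ fun n => x (n, m)) = 0 := by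
      intro m
      have := (Finset.sum_eq_zero_iff_of_nonneg (fun m _ => h1nn m)).mp h1.symm
      exact this m (Finset.mem_univ m)
    have hconst : ∀ m : Fin M, ∀ i j : Fin N, x (i, m) = x (j, m) := by
      intro m i j
      have h0 : Matrix.toLinearMap₂' ℝ L (fun n => x (n, m)) (fun n => x (n, m)) = 0 := by
        rw [Matrix.toLinearMap₂'_apply']; exact hterm1 m
      rw [hL, SimpleGraph.lapMatrix_toLinearMap₂'_apply'_eq_zero_iff_forall_reachable] at h0
      exact h0 i j (hG.preconnected i j)
    have hterm2 : ∀ n : Fin N, (H n) *ᵥ (fun m => x (n, m)) = 0 := by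
      intro n
      have := (Finset.sum_eq_zero_iff_of_nonneg (fun n _ => h2nn n)).mp h2.symm
      exact dotProduct_self_eq_zero.mp (this n (Finset.mem_univ n))
    obtain ⟨n0⟩ := hG.nonempty
    set v : Fin M → ℝ := fun m => x (n0, m) with hv
    have hvz : (∑ n, (H n)ᵀ * H n) *ᵥ v = 0 := by
      have hsum : (∑ n, (H n)ᵀ * H n) *ᵥ v = ∑ n, ((H n)ᵀ * H n) *ᵥ v := by
        funext m
        simp only [mulVec, dotProduct, Finset.sum_apply, Matrix.sum_apply, Finset.sum_mul]
        rw [Finset.sum_comm]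
      rw [hsum]
      refine Finset.sum_eq_zero fun n _ => ?_
      have : v = fun m => x (n, m) := by
        funext m; exact hconst m n0 n
      rw [this, ← mulVec_mulVec, hterm2 n, mulVec_zero]
    have : v = 0 := by
      obtain ⟨inv⟩ := hObs.nonempty_invertible
      have := congrArg (fun w => (⅟(∑ n, (H n)ᵀ * H n)) *ᵥ w) hvz
      simpa [mulVec_mulVec] using this
    apply hx
    funext ⟨n, m⟩
    have : x (n, m) = v m := (hconst m n n0)
    rw [this]
    simp [‹v = 0›]
end

section
/- Let G be a graph on vertex set V with Laplacian L and per-vertex matrices H_n (M columns each). Let 𝒳 ⊆ V induce a connected subgraph with Laplacian L_𝒳, and suppose Σ_{i∈𝒳} H_i^T H_i is invertible. If α, β > 0 are such that J = β(L ⊗ I_M) + α D_H^T D_H is positive definite with λ_max(J) ≤ 1, then J^𝒳 = β(L_𝒳 ⊗ I_M) + α (D_H^𝒳)^T D_H^𝒳 is also positive definite and satisfies λ_max(J^𝒳) ≤ 1. -/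
open scoped Kronecker
open Matrix Filter

set_option linter.unusedSectionVars false

section Spectral
variable {ι : Type*} [Fintype ι] [DecidableEq ι] {A : Matrix ι ι ℝ}

lemma eigSet_subset_range (hA : A.IsHermitian) : eigSet A ⊆ Set.range hA.eigenvalues := by
  rintro t ⟨v, hv, hAv⟩
  set U : Matrix ι ι ℝ := (hA.eigenvectorUnitary : Matrix ι ι ℝ) with hUdef
  have hUU : U * star U = 1 := mem_unitaryGroup_iff.mp hA.eigenvectorUnitary.2
  set w : ι → ℝ := star U *ᵥ v with hw
  have hUw : U *ᵥ w = v := by rw [hw, mulVec_mulVec, hUU, one_mulVec]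
  have hw0 : w ≠ 0 := by
    intro h; apply hv; rw [← hUw, h, mulVec_zero]
  have hspec : star U * A * U = diagonal hA.eigenvalues := by
    have hspec' : A = U * diagonal hA.eigenvalues * star U := by
      have := hA.spectral_theorem
      simpa using this
    have hUU' : star U * U = 1 := mem_unitaryGroup_iff'.mp hA.eigenvectorUnitary.2
    conv_lhs => rw [hspec']
    simp only [Matrix.mul_assoc]
    rw [hUU', Matrix.mul_one, ← Matrix.mul_assoc, hUU', Matrix.one_mul]
  have hdiag : diagonal hA.eigenvalues *ᵥ w = t • w := by
    rw [← hspec]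
    rw [← mulVec_mulVec, ← mulVec_mulVec, hUw, hAv, mulVec_smul]
  obtain ⟨i, hi⟩ := Function.ne_iff.mp hw0
  have := congrFun hdiag i
  rw [mulVec_diagonal] at this
  refine ⟨i, mul_right_cancel₀ hi ?_⟩
  simpa using this

lemma bddAbove_eigSet (hA : A.IsHermitian) : BddAbove (eigSet A) :=
  (Set.finite_range hA.eigenvalues).bddAbove.mono (eigSet_subset_range hA)

lemma eigenvalues_le_lmax (hA : A.IsHermitian) (i : ι) : hA.eigenvalues i ≤ lmax A := by
  refine le_csSup (bddAbove_eigSet hA) ⟨⇑(hA.eigenvectorBasis i), ?_, hA.mulVec_eigenvectorBasis i⟩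
  have := hA.eigenvectorBasis.orthonormal.ne_zero i
  intro h
  apply this
  ext j
  exact congrFun h j

lemma dot_le_lmax (hA : A.IsHermitian) (v : ι → ℝ) :
    v ⬝ᵥ (A *ᵥ v) ≤ lmax A * (v ⬝ᵥ v) := by
  set U : Matrix ι ι ℝ := (hA.eigenvectorUnitary : Matrix ι ι ℝ) with hUdef
  have hUU : U * star U = 1 := mem_unitaryGroup_iff.mp hA.eigenvectorUnitary.2
  have hstar : star U = Uᵀ := by
    rw [Matrix.star_eq_conjTranspose, conjTranspose_eq_transpose_of_trivial]
  set w : ι → ℝ := star U *ᵥ v with hw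
  have hUw : U *ᵥ w = v := by rw [hw, mulVec_mulVec, hUU, one_mulVec]
  have hspec : A = U * diagonal hA.eigenvalues * star U := by
    have := hA.spectral_theorem
    simpa using this
  have key0 : v ⬝ᵥ (A *ᵥ v) = v ⬝ᵥ ((U * diagonal hA.eigenvalues * star U) *ᵥ v) := by
    rw [← hspec]
  have key1 : v ⬝ᵥ (A *ᵥ v) = ∑ i, hA.eigenvalues i * (w i) ^ 2 := by
    rw [key0, ← mulVec_mulVec, ← mulVec_mulVec, ← hw, dotProduct_mulVec]
    have : v ᵥ* U = w := by rw [hw, hstar, mulVec_transpose]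
    rw [this]
    simp [dotProduct, mulVec_diagonal]
    exact Finset.sum_congr rfl fun i _ => by ring
  have key2 : v ⬝ᵥ v = ∑ i, (w i) ^ 2 := by
    have h1 : w ⬝ᵥ w = v ⬝ᵥ v := by
      calc w ⬝ᵥ w = w ⬝ᵥ (star U *ᵥ v) := by rw [← hw]
        _ = (w ᵥ* star U) ⬝ᵥ v := dotProduct_mulVec _ _ _
        _ = (U *ᵥ w) ⬝ᵥ v := by rw [hstar, vecMul_transpose]
        _ = v ⬝ᵥ v := by rw [hUw]
    rw [← h1]
    exact Finset.sum_congr rfl fun i _ => by ring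
  rw [key1, key2, Finset.mul_sum]
  refine Finset.sum_le_sum fun i _ => ?_
  exact mul_le_mul_of_nonneg_right (eigenvalues_le_lmax hA i) (sq_nonneg _)

end Spectral

section Quad
variable {ι : Type*} [Fintype ι] [DecidableEq ι] {M : ℕ}

lemma dot_kron (L : Matrix ι ι ℝ) (x : ι × Fin M → ℝ) :
    x ⬝ᵥ ((L ⊗ₖ (1 : Matrix (Fin M) (Fin M) ℝ)) *ᵥ x) =
      ∑ m : Fin M, (fun i => x (i, m)) ⬝ᵥ (L *ᵥ fun i => x (i, m)) := by
  simp only [dotProduct, mulVec, Fintype.sum_prod_type, kroneckerMap_apply, Matrix.one_apply,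
    mul_ite, mul_one, mul_zero, ite_mul, zero_mul, Finset.sum_ite_eq, Finset.mem_univ, if_true]
  rw [Finset.sum_comm]

lemma dot_blk (A : ι → Matrix (Fin M) (Fin M) ℝ) (x : ι × Fin M → ℝ) :
    x ⬝ᵥ (blkOf A *ᵥ x) =
      ∑ i : ι, (fun m => x (i, m)) ⬝ᵥ (A i *ᵥ fun m => x (i, m)) := by
  simp only [dotProduct, mulVec, blkOf, Matrix.of_apply, Fintype.sum_prod_type,
    ite_mul, zero_mul, mul_ite, mul_zero]
  refine Finset.sum_congr rfl fun i _ => Finset.sum_congr rfl fun m _ => ?_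
  congr 1
  rw [Finset.sum_comm]
  simp [Finset.sum_ite_eq, Finset.mem_univ]

lemma quad_decomp (L : Matrix ι ι ℝ) (A : ι → Matrix (Fin M) (Fin M) ℝ) (α β : ℝ)
    (x : ι × Fin M → ℝ) :
    x ⬝ᵥ ((β • (L ⊗ₖ (1 : Matrix (Fin M) (Fin M) ℝ)) + α • blkOf A) *ᵥ x) =
      β * (∑ m : Fin M, (fun i => x (i, m)) ⬝ᵥ (L *ᵥ fun i => x (i, m))) +
      α * (∑ i : ι, (fun m => x (i, m)) ⬝ᵥ (A i *ᵥ fun m => x (i, m))) := by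
  rw [add_mulVec, dotProduct_add, smul_mulVec, smul_mulVec,
    dotProduct_smul, dotProduct_smul, dot_kron, dot_blk, smul_eq_mul, smul_eq_mul]

lemma dot_gram {P : ℕ} (H : Matrix (Fin P) (Fin M) ℝ) (y : Fin M → ℝ) :
    y ⬝ᵥ ((Hᵀ * H) *ᵥ y) = (H *ᵥ y) ⬝ᵥ (H *ᵥ y) := by
  rw [← mulVec_mulVec, dotProduct_mulVec, vecMul_transpose]

lemma lap_quad {V : Type*} [Fintype V] [DecidableEq V] (G : SimpleGraph V) [DecidableRel G.Adj]
    (x : V → ℝ) :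
    x ⬝ᵥ (G.lapMatrix ℝ *ᵥ x) =
      (∑ i : V, ∑ j : V, if G.Adj i j then (x i - x j) ^ 2 else 0) / 2 := by
  rw [← Matrix.toLinearMap₂'_apply', SimpleGraph.lapMatrix_toLinearMap₂']

lemma blkOf_isHermitian (A : ι → Matrix (Fin M) (Fin M) ℝ) (hA : ∀ i, (A i).IsHermitian) :
    (blkOf A).IsHermitian := by
  ext ⟨i, m⟩ ⟨j, m'⟩
  simp only [conjTranspose_apply, blkOf, Matrix.of_apply, star_trivial]
  by_cases h : i = j
  · subst h
    simp only [if_pos rfl]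
    conv_lhs => rw [← hA i]
    simp [conjTranspose_apply]
  · simp [h, Ne.symm h]

lemma kron_one_isHermitian {L : Matrix ι ι ℝ} (hL : L.IsHermitian) :
    (L ⊗ₖ (1 : Matrix (Fin M) (Fin M) ℝ)).IsHermitian := by
  ext ⟨i, m⟩ ⟨j, m'⟩
  simp only [conjTranspose_apply, kroneckerMap_apply, star_trivial, Matrix.one_apply]
  have : L j i = L i j := by
    conv_lhs => rw [← hL]
    simp [conjTranspose_apply]
  rw [this]
  by_cases h : m = m' <;> simp [h, Ne.symm, eq_comm]

lemma sum_subtype_of_zero {N : ℕ} (𝒳 : Set (Fin N)) [DecidablePred (· ∈ 𝒳)] (f : Fin N → ℝ)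
    (h0 : ∀ n, n ∉ 𝒳 → f n = 0) : ∑ i : 𝒳, f i.1 = ∑ n, f n := by
  rw [← Finset.sum_subtype (Finset.univ.filter (· ∈ 𝒳)) (by simp) f]
  exact Finset.sum_subset (Finset.filter_subset _ _)
    (fun x _ hx => h0 x (by simpa using hx))

lemma sum_subtype_le {N : ℕ} (𝒳 : Set (Fin N)) [DecidablePred (· ∈ 𝒳)] (f : Fin N → ℝ)
    (hf : ∀ n, 0 ≤ f n) : ∑ i : 𝒳, f i.1 ≤ ∑ n, f n := by
  rw [← Finset.sum_subtype (Finset.univ.filter (· ∈ 𝒳)) (by simp) f]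
  exact Finset.sum_le_sum_of_subset_of_nonneg (Finset.filter_subset _ _)
    (fun x _ _ => hf x)

lemma sum_matrix_mulVec {κ : Type*} [Fintype κ] {a b : ℕ} (A : κ → Matrix (Fin a) (Fin b) ℝ)
    (c : Fin b → ℝ) : (∑ i, A i) *ᵥ c = ∑ i, A i *ᵥ c := by
  ext j
  simp only [mulVec, dotProduct, Finset.sum_apply, Matrix.sum_apply, Finset.sum_mul]
  rw [Finset.sum_comm]

end Quad

theorem stmt6 {N M : ℕ} (G : SimpleGraph (Fin N)) [DecidableRel G.Adj]
    (P : Fin N → ℕ) (H : ∀ n, Matrix (Fin (P n)) (Fin M) ℝ)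
    (𝒳 : Set (Fin N)) [DecidablePred (· ∈ 𝒳)]
    [DecidableRel (SimpleGraph.induce 𝒳 G).Adj]
    (hconn : (SimpleGraph.induce 𝒳 G).Connected)
    (hObs : IsUnit (∑ i : 𝒳, (H i.1)ᵀ * H i.1))
    (α β : ℝ) (hα : 0 < α) (hβ : 0 < β)
    (hPD : (β • (G.lapMatrix ℝ ⊗ₖ (1 : Matrix (Fin M) (Fin M) ℝ)) +
      α • blkOf (fun n => (H n)ᵀ * H n)).PosDef)
    (hmax : lmax (β • (G.lapMatrix ℝ ⊗ₖ (1 : Matrix (Fin M) (Fin M) ℝ)) +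
      α • blkOf (fun n => (H n)ᵀ * H n)) ≤ 1) :
    (β • ((SimpleGraph.induce 𝒳 G).lapMatrix ℝ ⊗ₖ (1 : Matrix (Fin M) (Fin M) ℝ)) +
      α • blkOf (fun i : 𝒳 => (H i.1)ᵀ * H i.1)).PosDef ∧
    lmax (β • ((SimpleGraph.induce 𝒳 G).lapMatrix ℝ ⊗ₖ (1 : Matrix (Fin M) (Fin M) ℝ)) +
      α • blkOf (fun i : 𝒳 => (H i.1)ᵀ * H i.1)) ≤ 1 := by
  classical
  set L' : Matrix (↥𝒳) (↥𝒳) ℝ := (SimpleGraph.induce 𝒳 G).lapMatrix ℝ with hL'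
  set A' : ↥𝒳 → Matrix (Fin M) (Fin M) ℝ := fun i => (H i.1)ᵀ * H i.1 with hA'
  -- nonneg facts, for arbitrary x
  have hQLnn : ∀ (x : ↥𝒳 × Fin M → ℝ) (m : Fin M),
      0 ≤ (fun i => x (i, m)) ⬝ᵥ (L' *ᵥ fun i => x (i, m)) := by
    intro x m
    have := (SimpleGraph.posSemidef_lapMatrix ℝ (SimpleGraph.induce 𝒳 G)).dotProduct_mulVec_nonneg (fun i => x (i, m))
    simpa using this
  have hQBnn : ∀ (x : ↥𝒳 × Fin M → ℝ) (i : ↥𝒳),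
      0 ≤ (fun m => x (i, m)) ⬝ᵥ (A' i *ᵥ fun m => x (i, m)) := by
    intro x i
    rw [hA', dot_gram]
    exact Finset.sum_nonneg fun k _ => mul_self_nonneg _
  obtain ⟨i₀⟩ := hconn.nonempty
  -- positive definiteness
  have hPDsub : (β • (L' ⊗ₖ (1 : Matrix (Fin M) (Fin M) ℝ)) + α • blkOf A').PosDef := by
    rw [posDef_iff_dotProduct_mulVec]
    constructor
    · have hsm : ∀ (c : ℝ) (B : Matrix (↥𝒳 × Fin M) (↥𝒳 × Fin M) ℝ), B.IsHermitian →
          (c • B).IsHermitian := by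
        intro c B hB
        show (c • B)ᴴ = c • B
        rw [conjTranspose_smul, hB.eq, star_trivial]
      have h1 : (L' ⊗ₖ (1 : Matrix (Fin M) (Fin M) ℝ)).IsHermitian := by
        refine kron_one_isHermitian ?_
        rw [Matrix.IsHermitian, conjTranspose_eq_transpose_of_trivial]
        exact (SimpleGraph.induce 𝒳 G).isSymm_lapMatrix (R := ℝ)
      have h2 : (blkOf A').IsHermitian := by
        refine blkOf_isHermitian _ fun i => ?_
        rw [hA']
        have := Matrix.isHermitian_conjTranspose_mul_self (H i.1)
        simpa [conjTranspose_eq_transpose_of_trivial] using this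
      exact (hsm β _ h1).add (hsm α _ h2)
    · intro x hx
      rw [star_trivial, quad_decomp]
      set QL := ∑ m : Fin M, (fun i => x (i, m)) ⬝ᵥ (L' *ᵥ fun i => x (i, m)) with hQL
      set QB := ∑ i : ↥𝒳, (fun m => x (i, m)) ⬝ᵥ (A' i *ᵥ fun m => x (i, m)) with hQB
      have hQLn : 0 ≤ QL := Finset.sum_nonneg fun m _ => hQLnn x m
      have hQBn : 0 ≤ QB := Finset.sum_nonneg fun i _ => hQBnn x i
      have hnn : 0 ≤ β * QL + α * QB :=
        add_nonneg (mul_nonneg hβ.le hQLn) (mul_nonneg hα.le hQBn)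
      rcases lt_or_eq_of_le hnn with hlt | heq
      · exact hlt
      exfalso
      have hQL0 : QL = 0 := by nlinarith
      have hQB0 : QB = 0 := by nlinarith
      -- constancy of slices
      have hsame : ∀ (m : Fin M) (i j : ↥𝒳), x (i, m) = x (j, m) := by
        intro m i j
        have hterm : (fun i => x (i, m)) ⬝ᵥ (L' *ᵥ fun i => x (i, m)) = 0 := by
          have hQL0' : (∑ m : Fin M, (fun i => x (i, m)) ⬝ᵥ (L' *ᵥ fun i => x (i, m))) = 0 := by
            rw [← hQL]; exact hQL0
          exact (Finset.sum_eq_zero_iff_of_nonneg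
            (fun m' (_ : m' ∈ Finset.univ) => hQLnn x m')).mp hQL0' m (Finset.mem_univ m)
        have hiff := SimpleGraph.lapMatrix_toLinearMap₂'_apply'_eq_zero_iff_forall_reachable
          (G := SimpleGraph.induce 𝒳 G) (fun i => x (i, m))
        have h0 : Matrix.toLinearMap₂' ℝ ((SimpleGraph.induce 𝒳 G).lapMatrix ℝ)
            (fun i => x (i, m)) (fun i => x (i, m)) = 0 := by
          rw [Matrix.toLinearMap₂'_apply']
          exact hterm
        exact hiff.mp h0 i j (hconn.preconnected i j)
      set c : Fin M → ℝ := fun m => x (i₀, m) with hc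
      have hHc : ∀ i : ↥𝒳, H i.1 *ᵥ c = 0 := by
        intro i
        have hQB0' : (∑ i : ↥𝒳, (fun m => x (i, m)) ⬝ᵥ (A' i *ᵥ fun m => x (i, m))) = 0 := by
          rw [← hQB]; exact hQB0
        have hterm : (fun m => x (i, m)) ⬝ᵥ (A' i *ᵥ fun m => x (i, m)) = 0 :=
          (Finset.sum_eq_zero_iff_of_nonneg
            (fun i' (_ : i' ∈ Finset.univ) => hQBnn x i')).mp hQB0' i (Finset.mem_univ i)
        have hx_eq : (fun m => x (i, m)) = c := funext fun m => hsame m i i₀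
        rw [hA', dot_gram, hx_eq] at hterm
        exact dotProduct_self_eq_zero.mp hterm
      have hc0 : c = 0 := by
        obtain ⟨u, hu⟩ := hObs
        have hsum : (∑ i : 𝒳, (H i.1)ᵀ * H i.1) *ᵥ c = 0 := by
          rw [sum_matrix_mulVec]
          refine Finset.sum_eq_zero fun i _ => ?_
          rw [← mulVec_mulVec, hHc i, mulVec_zero]
        calc c = 1 *ᵥ c := (one_mulVec c).symm
          _ = ((↑u⁻¹ : Matrix (Fin M) (Fin M) ℝ) * ↑u) *ᵥ c := by rw [u.inv_mul]
          _ = (↑u⁻¹ : Matrix (Fin M) (Fin M) ℝ) *ᵥ ((↑u : Matrix (Fin M) (Fin M) ℝ) *ᵥ c) := by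
              rw [mulVec_mulVec]
          _ = 0 := by rw [hu, hsum, mulVec_zero]
      apply hx
      funext p
      have h1 : x p = c p.2 := hsame p.2 p.1 i₀
      rw [h1, hc0]
      rfl
  refine ⟨hPDsub, ?_⟩
  -- eigenvalue bound
  refine Real.sSup_le ?_ zero_le_one
  rintro t ⟨v, hv, hJv⟩
  have hvvn : 0 ≤ v ⬝ᵥ v := Finset.sum_nonneg fun p _ => mul_self_nonneg _
  have hvv : 0 < v ⬝ᵥ v := by
    rcases lt_or_eq_of_le hvvn with h | h
    · exact h
    · exact absurd (dotProduct_self_eq_zero.mp h.symm) hv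
  set w : Fin N × Fin M → ℝ :=
    fun p => if h : p.1 ∈ 𝒳 then v (⟨p.1, h⟩, p.2) else 0 with hwdef
  have hw_on : ∀ (i : ↥𝒳) (m : Fin M), w (i.1, m) = v (i, m) := by
    intro i m
    simp only [hwdef, i.2, dif_pos, Subtype.coe_eta]
  have hw_off : ∀ (n : Fin N), n ∉ 𝒳 → ∀ m, w (n, m) = 0 := by
    intro n hn m
    simp only [hwdef, dif_neg hn]
  -- block part equality
  have hblk_eq : ∑ i : ↥𝒳, (fun m => v (i, m)) ⬝ᵥ (A' i *ᵥ fun m => v (i, m)) =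
      ∑ n : Fin N, (fun m => w (n, m)) ⬝ᵥ (((H n)ᵀ * H n) *ᵥ fun m => w (n, m)) := by
    rw [← sum_subtype_of_zero 𝒳
      (fun n => (fun m => w (n, m)) ⬝ᵥ (((H n)ᵀ * H n) *ᵥ fun m => w (n, m)))
      (fun n hn => by
        show (fun m => w (n, m)) ⬝ᵥ (((H n)ᵀ * H n) *ᵥ fun m => w (n, m)) = 0
        have h00 : (fun m => w (n, m)) = 0 := funext fun m => hw_off n hn m
        rw [h00]; simp)]
    refine Finset.sum_congr rfl fun i _ => ?_
    have : (fun m => w (i.1, m)) = fun m => v (i, m) := funext fun m => hw_on i m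
    rw [this, hA']
  -- Laplacian part inequality
  have hlap_le : ∑ m : Fin M, (fun i => v (i, m)) ⬝ᵥ (L' *ᵥ fun i => v (i, m)) ≤
      ∑ m : Fin M, (fun n => w (n, m)) ⬝ᵥ (G.lapMatrix ℝ *ᵥ fun n => w (n, m)) := by
    refine Finset.sum_le_sum fun m _ => ?_
    rw [hL', lap_quad, lap_quad]
    have key : (∑ i : ↥𝒳, ∑ j : ↥𝒳,
        if (SimpleGraph.induce 𝒳 G).Adj i j then (v (i, m) - v (j, m)) ^ 2 else 0) ≤
        ∑ n : Fin N, ∑ n' : Fin N, if G.Adj n n' then (w (n, m) - w (n', m)) ^ 2 else 0 := by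
      have hF : ∀ n n', 0 ≤ (if G.Adj n n' then (w (n, m) - w (n', m)) ^ 2 else 0) := by
        intro n n'; split <;> positivity
      have step1 : ∀ i : ↥𝒳, (∑ j : ↥𝒳,
          if (SimpleGraph.induce 𝒳 G).Adj i j then (v (i, m) - v (j, m)) ^ 2 else 0) ≤
          ∑ n' : Fin N, if G.Adj i.1 n' then (w (i.1, m) - w (n', m)) ^ 2 else 0 := by
        intro i
        have heq : (∑ j : ↥𝒳,
            if (SimpleGraph.induce 𝒳 G).Adj i j then (v (i, m) - v (j, m)) ^ 2 else 0) =
            ∑ j : ↥𝒳, if G.Adj i.1 j.1 then (w (i.1, m) - w (j.1, m)) ^ 2 else 0 := by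
          refine Finset.sum_congr rfl fun j _ => ?_
          rw [hw_on i m, hw_on j m]
          exact if_congr Iff.rfl rfl rfl
        rw [heq]
        exact sum_subtype_le 𝒳 (fun n' => if G.Adj i.1 n' then (w (i.1, m) - w (n', m)) ^ 2 else 0)
          (fun n' => hF i.1 n')
      calc (∑ i : ↥𝒳, ∑ j : ↥𝒳,
          if (SimpleGraph.induce 𝒳 G).Adj i j then (v (i, m) - v (j, m)) ^ 2 else 0)
          ≤ ∑ i : ↥𝒳, ∑ n' : Fin N,
            if G.Adj i.1 n' then (w (i.1, m) - w (n', m)) ^ 2 else 0 :=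
            Finset.sum_le_sum fun i _ => step1 i
        _ ≤ ∑ n : Fin N, ∑ n' : Fin N,
            if G.Adj n n' then (w (n, m) - w (n', m)) ^ 2 else 0 :=
            sum_subtype_le 𝒳 _ (fun n => Finset.sum_nonneg fun n' _ => hF n n')
    linarith
  -- assemble
  have hJex : (β • (L' ⊗ₖ (1 : Matrix (Fin M) (Fin M) ℝ)) + α • blkOf A') *ᵥ v = t • v := hJv
  have htv : t * (v ⬝ᵥ v) = v ⬝ᵥ ((β • (L' ⊗ₖ (1 : Matrix (Fin M) (Fin M) ℝ)) +
      α • blkOf A') *ᵥ v) := by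
    rw [hJex, dotProduct_smul, smul_eq_mul]
  have main1 : v ⬝ᵥ ((β • (L' ⊗ₖ (1 : Matrix (Fin M) (Fin M) ℝ)) + α • blkOf A') *ᵥ v) ≤
      w ⬝ᵥ ((β • (G.lapMatrix ℝ ⊗ₖ (1 : Matrix (Fin M) (Fin M) ℝ)) +
        α • blkOf (fun n => (H n)ᵀ * H n)) *ᵥ w) := by
    rw [quad_decomp, quad_decomp]
    refine add_le_add (mul_le_mul_of_nonneg_left hlap_le hβ.le) (le_of_eq ?_)
    rw [hblk_eq]
  have hww : w ⬝ᵥ w = v ⬝ᵥ v := by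
    simp only [dotProduct, Fintype.sum_prod_type]
    rw [← sum_subtype_of_zero 𝒳 (fun n => ∑ m, w (n, m) * w (n, m))
      (fun n hn => Finset.sum_eq_zero fun m _ => by rw [hw_off n hn m, zero_mul])]
    exact Finset.sum_congr rfl fun i _ => Finset.sum_congr rfl fun m _ => by rw [hw_on i m]
  have main2 : w ⬝ᵥ ((β • (G.lapMatrix ℝ ⊗ₖ (1 : Matrix (Fin M) (Fin M) ℝ)) +
      α • blkOf (fun n => (H n)ᵀ * H n)) *ᵥ w) ≤
      lmax (β • (G.lapMatrix ℝ ⊗ₖ (1 : Matrix (Fin M) (Fin M) ℝ)) +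
        α • blkOf (fun n => (H n)ᵀ * H n)) * (v ⬝ᵥ v) := by
    rw [← hww]
    exact dot_le_lmax hPD.1 w
  have hfin : t * (v ⬝ᵥ v) ≤ 1 * (v ⬝ᵥ v) := by
    rw [one_mul]
    calc t * (v ⬝ᵥ v) = _ := htv
      _ ≤ _ := main1
      _ ≤ _ := main2
      _ ≤ 1 * (v ⬝ᵥ v) := mul_le_mul_of_nonneg_right hmax hvvn
      _ = v ⬝ᵥ v := one_mul _
  exact le_of_mul_le_mul_right hfin hvv
end
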